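/- For all natural numbers n ≥ 1 and m with m ≤ n, the classical Stirling numbers of the second kind satisfy S(n,m) = (1/m!) · Σ_{j=0}^{n-1} E(n,j) · C(j, n−m), where E(n,j) are the Eulerian numbers and C(j, n−m) is the ordinary binomial coefficient. -/

import Mathlib

open Finset

/-- The classical Stirling numbers of the second kind, defined by the recurrence
`S(n+1,k) = S(n,k-1) + k·S(n,k)`, with `S(0,0) = 1`, `S(n,0) = 0` for `n ≥ 1`,
and `S(n,k) = 0` for `k > n`. -/
def stirling2 : ℕ → ℕ → ℕ
  | 0, 0 => 1
  | 0, _ + 1 => 0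
  | _ + 1, 0 => 0
  | n + 1, k + 1 => stirling2 n k + (k + 1) * stirling2 n (k + 1)

/-- The Eulerian numbers `E(n,k) = ∑_{j=0}^k (-1)^j C(n+1,j) (k+1-j)^n`. -/
def eulerianNum (n k : ℕ) : ℤ :=
  ∑ j ∈ Finset.range (k + 1), (-1 : ℤ) ^ j * ((n + 1).choose j : ℤ) * ((k + 1 - j : ℕ) : ℤ) ^ n

/-- Pascal split for alternating sums. -/
lemma pascal_split (p t : ℕ) (a : ℕ → ℤ) :
    ∑ i ∈ range (t + 1), (-1 : ℤ) ^ i * ((p + 1).choose i : ℤ) * a i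
      = (∑ i ∈ range (t + 1), (-1 : ℤ) ^ i * (p.choose i : ℤ) * a i)
        - ∑ i ∈ range t, (-1 : ℤ) ^ i * (p.choose i : ℤ) * a (i + 1) := by
  rw [Finset.sum_range_succ' (fun i => (-1 : ℤ) ^ i * ((p + 1).choose i : ℤ) * a i) t,
    Finset.sum_range_succ' (fun i => (-1 : ℤ) ^ i * (p.choose i : ℤ) * a i) t]
  have h : ∀ i, (-1 : ℤ) ^ (i + 1) * (((p + 1).choose (i + 1) : ℕ) : ℤ) * a (i + 1)
      = (-1 : ℤ) ^ (i + 1) * (p.choose (i + 1) : ℤ) * a (i + 1)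
        - (-1 : ℤ) ^ i * (p.choose i : ℤ) * a (i + 1) := by
    intro i
    rw [Nat.choose_succ_succ]
    push_cast
    ring
  simp only [h]
  rw [Finset.sum_sub_distrib]
  simp only [Nat.choose_zero_right, Nat.cast_one]
  ring

lemma cast_choose_right (a b : ℕ) :
    ((b : ℤ) + 1) * (a.choose (b + 1) : ℤ) = (a.choose b : ℤ) * ((a : ℤ) - b) := by
  rcases le_or_gt b a with h | h
  · have := Nat.choose_succ_right_eq a b
    have hcast : ((a - b : ℕ) : ℤ) = (a : ℤ) - b := by
      omega
    have h2 : ((a.choose (b+1) * (b+1) : ℕ) : ℤ) = ((a.choose b * (a - b) : ℕ) : ℤ) := by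
      exact_mod_cast congrArg (Nat.cast : ℕ → ℤ) this
    push_cast at h2
    rw [hcast] at h2
    linarith
  · rw [Nat.choose_eq_zero_of_lt h, Nat.choose_eq_zero_of_lt (by omega)]
    simp

lemma cast_choose_mul_succ (a b : ℕ) :
    ((a : ℤ) + 1) * (a.choose b : ℤ) = ((a + 1).choose b : ℤ) * ((a : ℤ) + 1 - b) := by
  rcases le_or_gt b (a + 1) with h | h
  · have := Nat.choose_mul_succ_eq a b
    have hcast : ((a + 1 - b : ℕ) : ℤ) = (a : ℤ) + 1 - b := by omega
    have h2 : ((a.choose b * (a+1) : ℕ) : ℤ) = (((a+1).choose b * (a + 1 - b) : ℕ) : ℤ) := by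
      exact_mod_cast congrArg (Nat.cast : ℕ → ℤ) this
    push_cast at h2
    rw [hcast] at h2
    linarith
  · rw [Nat.choose_eq_zero_of_lt (by omega), Nat.choose_eq_zero_of_lt (by omega)]
    simp

lemma cast_succ_mul_choose (a b : ℕ) :
    ((a : ℤ) + 1) * (a.choose b : ℤ) = ((a + 1).choose (b + 1) : ℤ) * ((b : ℤ) + 1) := by
  exact_mod_cast congrArg (Nat.cast : ℕ → ℤ) (Nat.add_one_mul_choose_eq a b)

lemma E_zero (n : ℕ) : eulerianNum n 0 = 1 := by
  simp [eulerianNum]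

lemma E_rec (n k : ℕ) :
    eulerianNum (n + 1) (k + 1)
      = ((k : ℤ) + 2) * eulerianNum n (k + 1) + ((n : ℤ) - k) * eulerianNum n k := by
  have hps := pascal_split (n + 1) (k + 1) (fun j => ((k + 2 - j : ℕ) : ℤ) ^ (n + 1))
  have hLHS : eulerianNum (n + 1) (k + 1)
      = ∑ j ∈ range (k + 2), (-1 : ℤ) ^ j * ((n + 2).choose j : ℤ) * ((k + 2 - j : ℕ) : ℤ) ^ (n + 1) := by
    rfl
  rw [hLHS, hps]
  -- A := first sum, B' := second sum
  set S : ℤ := ∑ j ∈ range (k + 1), (-1 : ℤ) ^ j * (n.choose j : ℤ) * ((k + 1 - j : ℕ) : ℤ) ^ n with hSdef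
  have hA : ∑ j ∈ range (k + 2), (-1 : ℤ) ^ j * ((n + 1).choose j : ℤ) * ((k + 2 - j : ℕ) : ℤ) ^ (n + 1)
      = ((k : ℤ) + 2) * eulerianNum n (k + 1) + ((n : ℤ) + 1) * S := by
    have h1 : ∀ j ∈ range (k + 2),
        (-1 : ℤ) ^ j * ((n + 1).choose j : ℤ) * ((k + 2 - j : ℕ) : ℤ) ^ (n + 1)
          = ((k : ℤ) + 2) * ((-1 : ℤ) ^ j * ((n + 1).choose j : ℤ) * ((k + 2 - j : ℕ) : ℤ) ^ n)
            - (j : ℤ) * ((-1 : ℤ) ^ j * ((n + 1).choose j : ℤ) * ((k + 2 - j : ℕ) : ℤ) ^ n) := by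
      intro j hj
      rw [mem_range] at hj
      have hc : ((k + 2 - j : ℕ) : ℤ) = (k : ℤ) + 2 - j := by omega
      rw [pow_succ, hc]
      ring
    rw [Finset.sum_congr rfl h1, Finset.sum_sub_distrib, ← Finset.mul_sum]
    have h2 : ∑ j ∈ range (k + 2), (j : ℤ) * ((-1 : ℤ) ^ j * ((n + 1).choose j : ℤ) * ((k + 2 - j : ℕ) : ℤ) ^ n)
        = -(((n : ℤ) + 1) * S) := by
      rw [Finset.sum_range_succ'
        (fun j => (j : ℤ) * ((-1 : ℤ) ^ j * ((n + 1).choose j : ℤ) * ((k + 2 - j : ℕ) : ℤ) ^ n)) (k + 1)]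
      have h3 : ∀ j ∈ range (k + 1),
          ((j + 1 : ℕ) : ℤ) * ((-1 : ℤ) ^ (j + 1) * ((n + 1).choose (j + 1) : ℤ) * ((k + 2 - (j + 1) : ℕ) : ℤ) ^ n)
            = -(((n : ℤ) + 1) * ((-1 : ℤ) ^ j * (n.choose j : ℤ) * ((k + 1 - j : ℕ) : ℤ) ^ n)) := by
        intro j hj
        have hcc := cast_succ_mul_choose n j
        have harg : k + 2 - (j + 1) = k + 1 - j := by omega
        rw [harg, pow_succ (-1 : ℤ)]
        push_cast
        linear_combination (-1 : ℤ) ^ j * ((k + 1 - j : ℕ) : ℤ) ^ n * hcc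
      rw [Finset.sum_congr rfl h3]
      simp [Finset.sum_neg_distrib, ← Finset.mul_sum, hSdef]
    rw [h2]
    have hE : eulerianNum n (k + 1)
        = ∑ j ∈ range (k + 2), (-1 : ℤ) ^ j * ((n + 1).choose j : ℤ) * ((k + 2 - j : ℕ) : ℤ) ^ n := rfl
    rw [hE]
    ring
  have hB : ∑ j ∈ range (k + 1), (-1 : ℤ) ^ j * ((n + 1).choose j : ℤ) * ((k + 2 - (j + 1) : ℕ) : ℤ) ^ (n + 1)
      = ((n : ℤ) + 1) * S - ((n : ℤ) - k) * eulerianNum n k := by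
    have h1 : ∀ j ∈ range (k + 1),
        (-1 : ℤ) ^ j * ((n + 1).choose j : ℤ) * ((k + 2 - (j + 1) : ℕ) : ℤ) ^ (n + 1)
          = ((n : ℤ) + 1) * ((-1 : ℤ) ^ j * (n.choose j : ℤ) * ((k + 1 - j : ℕ) : ℤ) ^ n)
            - ((n : ℤ) - k) * ((-1 : ℤ) ^ j * ((n + 1).choose j : ℤ) * ((k + 1 - j : ℕ) : ℤ) ^ n) := by
      intro j hj
      rw [mem_range] at hj
      have harg : k + 2 - (j + 1) = k + 1 - j := by omega
      have hc : ((k + 1 - j : ℕ) : ℤ) = (k : ℤ) + 1 - j := by omega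
      have hcm := cast_choose_mul_succ n j
      rw [harg, pow_succ, hc]
      linear_combination (-(-1 : ℤ) ^ j) * ((k : ℤ) + 1 - j) ^ n * hcm
    rw [Finset.sum_congr rfl h1, Finset.sum_sub_distrib, ← Finset.mul_sum, ← Finset.mul_sum]
    rfl
  rw [hA]
  rw [show (∑ i ∈ range (k + 1), (-1 : ℤ) ^ i * ((n + 1).choose i : ℤ)
      * ((k + 2 - (i + 1) : ℕ) : ℤ) ^ (n + 1)) = ((n : ℤ) + 1) * S - ((n : ℤ) - k) * eulerianNum n k from hB]
  ring

lemma alt1 : ∀ k, 1 ≤ k → ∑ j ∈ range (k + 1), (-1 : ℤ) ^ j * ((1).choose j : ℤ) = 0 := by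
  intro k hk
  induction k with
  | zero => omega
  | succ m ih =>
    rcases Nat.eq_zero_or_pos m with rfl | hm
    · simp [Finset.sum_range_succ]
    · rw [Finset.sum_range_succ, ih hm, Nat.choose_eq_zero_of_lt (by omega)]
      simp

lemma E0 (k : ℕ) (hk : 1 ≤ k) : eulerianNum 0 k = 0 := by
  have h : eulerianNum 0 k = ∑ j ∈ range (k + 1), (-1 : ℤ) ^ j * ((1).choose j : ℤ) := by
    apply Finset.sum_congr rfl
    intro j _
    rw [pow_zero, mul_one]
  rw [h]
  exact alt1 k hk

lemma E_vanish (n : ℕ) (hn : 1 ≤ n) : ∀ k, n ≤ k → eulerianNum n k = 0 := by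
  induction n with
  | zero => omega
  | succ n ih =>
    intro k hk
    obtain ⟨k', rfl⟩ : ∃ k', k = k' + 1 := ⟨k - 1, by omega⟩
    rw [E_rec]
    rcases Nat.eq_zero_or_pos n with rfl | hn'
    · rw [E0 (k' + 1) (by omega)]
      rcases Nat.eq_zero_or_pos k' with rfl | h
      · simp
      · rw [E0 k' h]; ring
    · rw [ih hn' (k' + 1) (by omega), ih hn' k' (by omega)]; ring

lemma choose_key (x j n : ℕ) (hj : j < n) :
    (x : ℤ) * ((x + j).choose n : ℤ)
      = ((n : ℤ) - j) * ((x + j + 1).choose (n + 1) : ℤ)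
        + ((j : ℤ) + 1) * ((x + j).choose (n + 1) : ℤ) := by
  have h1 := cast_succ_mul_choose (x + j) n
  have h2 := cast_choose_right (x + j) n
  have h3 : ((n : ℤ) + 1) * ((x : ℤ) * ((x + j).choose n : ℤ))
      = ((n : ℤ) + 1) * (((n : ℤ) - j) * ((x + j + 1).choose (n + 1) : ℤ)
        + ((j : ℤ) + 1) * ((x + j).choose (n + 1) : ℤ)) := by
    push_cast at h1 h2 ⊢
    linear_combination ((n : ℤ) - j) * h1 - ((j : ℤ) + 1) * h2
  exact mul_left_cancel₀ (by positivity) h3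

lemma worpitzky (n : ℕ) (hn : 1 ≤ n) (x : ℕ) :
    ((x : ℤ)) ^ n = ∑ j ∈ range n, eulerianNum n j * ((x + j).choose n : ℤ) := by
  induction n with
  | zero => omega
  | succ n ih =>
    rcases Nat.eq_zero_or_pos n with rfl | hn'
    · simp [eulerianNum]
    · have ihx := ih hn'
      have step1 : ((x : ℤ)) ^ (n + 1)
          = ∑ j ∈ range n, (eulerianNum n j * (((n : ℤ) - j) * ((x + j + 1).choose (n + 1) : ℤ))
              + eulerianNum n j * (((j : ℤ) + 1) * ((x + j).choose (n + 1) : ℤ))) := by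
        rw [pow_succ, mul_comm, ihx, Finset.mul_sum]
        apply Finset.sum_congr rfl
        intro j hj
        rw [mem_range] at hj
        have := choose_key x j n hj
        linear_combination eulerianNum n j * this
      have hA := step1
      -- abbreviations
      set A : ℤ := ∑ j ∈ range n,
        eulerianNum n j * (((n : ℤ) - j) * ((x + j + 1).choose (n + 1) : ℤ)) with hAdef
      set B : ℤ := ∑ j ∈ range n,
        eulerianNum n j * (((j : ℤ) + 1) * ((x + j).choose (n + 1) : ℤ)) with hBdef
      have e1 : ((x : ℤ)) ^ (n + 1) = A + B := by
        rw [step1, Finset.sum_add_distrib]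
      rw [e1]
      -- peel target
      have e2 : ∑ j ∈ range (n + 1), eulerianNum (n + 1) j * ((x + j).choose (n + 1) : ℤ)
          = (∑ j ∈ range n, eulerianNum (n + 1) (j + 1) * ((x + (j + 1)).choose (n + 1) : ℤ))
            + eulerianNum (n + 1) 0 * ((x + 0).choose (n + 1) : ℤ) :=
        Finset.sum_range_succ' (fun j => eulerianNum (n + 1) j * ((x + j).choose (n + 1) : ℤ)) n
      have e3 : ∑ j ∈ range n, eulerianNum (n + 1) (j + 1) * ((x + (j + 1)).choose (n + 1) : ℤ)
          = (∑ j ∈ range n, eulerianNum n (j + 1) * ((((j + 1 : ℕ) : ℤ) + 1) * ((x + (j + 1)).choose (n + 1) : ℤ)))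
            + A := by
        rw [hAdef, ← Finset.sum_add_distrib]
        apply Finset.sum_congr rfl
        intro j hj
        rw [E_rec]
        have harg : x + (j + 1) = x + j + 1 := by omega
        rw [harg]
        push_cast
        ring
      have e4 : B = (∑ j ∈ range n, eulerianNum n (j + 1) * ((((j + 1 : ℕ) : ℤ) + 1) * ((x + (j + 1)).choose (n + 1) : ℤ)))
          + eulerianNum n 0 * ((((0 : ℕ) : ℤ) + 1) * ((x + 0).choose (n + 1) : ℤ)) := by
        have p1 : ∑ j ∈ range (n + 1), eulerianNum n j * (((j : ℤ) + 1) * ((x + j).choose (n + 1) : ℤ))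
            = (∑ j ∈ range n, eulerianNum n (j + 1) * ((((j + 1 : ℕ) : ℤ) + 1) * ((x + (j + 1)).choose (n + 1) : ℤ)))
              + eulerianNum n 0 * ((((0 : ℕ) : ℤ) + 1) * ((x + 0).choose (n + 1) : ℤ)) :=
          Finset.sum_range_succ' (fun j => eulerianNum n j * (((j : ℤ) + 1) * ((x + j).choose (n + 1) : ℤ))) n
        have p2 : ∑ j ∈ range (n + 1), eulerianNum n j * (((j : ℤ) + 1) * ((x + j).choose (n + 1) : ℤ))
            = B + eulerianNum n n * (((n : ℤ) + 1) * ((x + n).choose (n + 1) : ℤ)) :=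
          Finset.sum_range_succ (fun j => eulerianNum n j * (((j : ℤ) + 1) * ((x + j).choose (n + 1) : ℤ))) n
        rw [E_vanish n hn' n le_rfl] at p2
        simp only [zero_mul, add_zero] at p2
        rw [← p1, p2]
      rw [E_zero n] at e4
      rw [e2, e3, e4, E_zero (n + 1)]
      simp only [Nat.cast_zero, zero_add, one_mul]
      ring

lemma stirling2_formula (n : ℕ) : ∀ m : ℕ,
    ((m.factorial : ℤ)) * (stirling2 n m : ℤ)
      = ∑ i ∈ range (m + 1), (-1 : ℤ) ^ i * (m.choose i : ℤ) * ((m - i : ℕ) : ℤ) ^ n := by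
  induction n with
  | zero =>
    intro m
    cases m with
    | zero => simp [stirling2]
    | succ k =>
      have hz : (stirling2 0 (k + 1) : ℤ) = 0 := by rfl
      rw [hz, mul_zero, eq_comm]
      have h : ∀ i ∈ range (k + 2), (-1 : ℤ) ^ i * ((k + 1).choose i : ℤ) * ((k + 1 - i : ℕ) : ℤ) ^ 0
          = (-1 : ℤ) ^ i * ((k + 1).choose i : ℤ) := by
        intro i _
        rw [pow_zero, mul_one]
      rw [Finset.sum_congr rfl h]
      exact Int.alternating_sum_range_choose_of_ne (Nat.succ_ne_zero k)
  | succ n ih =>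
    intro m
    cases m with
    | zero => simp [stirling2]
    | succ k =>
      have hrec : (stirling2 (n + 1) (k + 1) : ℤ)
          = (stirling2 n k : ℤ) + ((k : ℤ) + 1) * (stirling2 n (k + 1) : ℤ) := by
        rw [show stirling2 (n + 1) (k + 1) = stirling2 n k + (k + 1) * stirling2 n (k + 1) from rfl]
        push_cast
        ring
      have hfac : ((k + 1).factorial : ℤ) = ((k : ℤ) + 1) * (k.factorial : ℤ) := by
        rw [Nat.factorial_succ]
        push_cast
        ring
      -- RHS = (k+1) * T with T = ∑_{i<k+2} (-1)^i C(k,i) (k+1-i)^n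
      have habsorb : ∀ i ∈ range (k + 2),
          (-1 : ℤ) ^ i * ((k + 1).choose i : ℤ) * ((k + 1 - i : ℕ) : ℤ) ^ (n + 1)
            = ((k : ℤ) + 1) * ((-1 : ℤ) ^ i * (k.choose i : ℤ) * ((k + 1 - i : ℕ) : ℤ) ^ n) := by
        intro i _
        have h := Nat.choose_mul_succ_eq k i
        have hc : ((k.choose i * (k + 1) : ℕ) : ℤ) = (((k + 1).choose i * (k + 1 - i) : ℕ) : ℤ) := by
          exact_mod_cast congrArg (Nat.cast : ℕ → ℤ) h
        push_cast at hc
        rw [pow_succ]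
        linear_combination (-1 : ℤ) ^ i * ((k + 1 - i : ℕ) : ℤ) ^ n * hc.symm
      rw [Finset.sum_congr rfl habsorb, ← Finset.mul_sum]
      -- T = ∑_{i<k+1} (-1)^i C(k,i)(k-i)^n + ∑_{i<k+2} (-1)^i C(k+1,i)(k+1-i)^n  (pascal_split)
      have hps := pascal_split k (k + 1) (fun i => ((k + 1 - i : ℕ) : ℤ) ^ n)
      have hT : ∑ i ∈ range (k + 2), (-1 : ℤ) ^ i * (k.choose i : ℤ) * ((k + 1 - i : ℕ) : ℤ) ^ n
          = (∑ i ∈ range (k + 2), (-1 : ℤ) ^ i * ((k + 1).choose i : ℤ) * ((k + 1 - i : ℕ) : ℤ) ^ n)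
            + ∑ i ∈ range (k + 1), (-1 : ℤ) ^ i * (k.choose i : ℤ) * ((k + 1 - (i + 1) : ℕ) : ℤ) ^ n := by
        rw [hps]
        ring
      have harg : ∀ i ∈ range (k + 1),
          (-1 : ℤ) ^ i * (k.choose i : ℤ) * ((k + 1 - (i + 1) : ℕ) : ℤ) ^ n
            = (-1 : ℤ) ^ i * (k.choose i : ℤ) * ((k - i : ℕ) : ℤ) ^ n := by
        intro i _
        rw [show k + 1 - (i + 1) = k - i from by omega]
      rw [hT, Finset.sum_congr rfl harg]
      linear_combination (((k + 1).factorial : ℤ)) * hrec + (stirling2 n k : ℤ) * hfac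
        + ((k : ℤ) + 1) * ih k + ((k : ℤ) + 1) * ih (k + 1)

lemma alt_choose_sum : ∀ (p q r : ℕ), p ≤ r →
    ∑ i ∈ range (p + 1), (-1 : ℤ) ^ i * (p.choose i : ℤ) * ((q + i).choose r : ℤ)
      = (-1 : ℤ) ^ p * ((q).choose (r - p) : ℤ) := by
  intro p
  induction p with
  | zero =>
    intro q r _
    simp
  | succ p ih =>
    intro q r hpr
    rw [pascal_split p (p + 1) (fun i => ((q + i).choose r : ℤ))]
    rw [Finset.sum_range_succ (fun i => (-1 : ℤ) ^ i * (p.choose i : ℤ) * ((q + i).choose r : ℤ)) (p + 1)]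
    have h2 : ∑ i ∈ range (p + 1), (-1 : ℤ) ^ i * (p.choose i : ℤ) * ((q + (i + 1)).choose r : ℤ)
        = ∑ i ∈ range (p + 1), (-1 : ℤ) ^ i * (p.choose i : ℤ) * (((q + 1) + i).choose r : ℤ) := by
      apply Finset.sum_congr rfl
      intro i _
      rw [show q + (i + 1) = (q + 1) + i from by omega]
    rw [h2, ih q r (by omega), ih (q + 1) r (by omega), Nat.choose_succ_self p]
    have hp : ((q + 1).choose (r - p) : ℤ) = ((q).choose (r - (p + 1)) : ℤ) + ((q).choose (r - p) : ℤ) := by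
      have : r - p = (r - (p + 1)) + 1 := by omega
      rw [this, Nat.choose_succ_succ]
      push_cast
      ring
    rw [hp]
    push_cast
    ring

lemma alt_choose_sum' (m j n : ℕ) (h : m ≤ n) :
    ∑ i ∈ range (m + 1), (-1 : ℤ) ^ i * (m.choose i : ℤ) * (((m - i) + j).choose n : ℤ)
      = (j.choose (n - m) : ℤ) := by
  rw [← Finset.sum_range_reflect]
  have hterm : ∀ i ∈ range (m + 1),
      (-1 : ℤ) ^ (m + 1 - 1 - i) * (m.choose (m + 1 - 1 - i) : ℤ) * (((m - (m + 1 - 1 - i)) + j).choose n : ℤ)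
        = (-1 : ℤ) ^ m * ((-1 : ℤ) ^ i * (m.choose i : ℤ) * ((j + i).choose n : ℤ)) := by
    intro i hi
    rw [mem_range] at hi
    have h1 : m + 1 - 1 - i = m - i := by omega
    have h2 : m - (m - i) = i := by omega
    have h3 : (m - i) + j = j + (m - i) := by omega
    have hsgn : (-1 : ℤ) ^ (m - i) = (-1 : ℤ) ^ m * (-1 : ℤ) ^ i := by
      rw [← pow_add, show m + i = (m - i) + 2 * i from by omega, pow_add, pow_mul]
      norm_num
    rw [h1, h2, Nat.choose_symm (by omega : i ≤ m), hsgn]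
    ring
  rw [Finset.sum_congr rfl hterm, ← Finset.mul_sum, alt_choose_sum m j n h, ← mul_assoc, ← pow_add,
    show m + m = 2 * m from by omega, pow_mul]
  norm_num

lemma main_int (n m : ℕ) (hn : 1 ≤ n) (hm : m ≤ n) :
    (m.factorial : ℤ) * (stirling2 n m : ℤ)
      = ∑ j ∈ range n, eulerianNum n j * (j.choose (n - m) : ℤ) := by
  rw [stirling2_formula n m]
  have h1 : ∀ i ∈ range (m + 1), (-1 : ℤ) ^ i * (m.choose i : ℤ) * ((m - i : ℕ) : ℤ) ^ n
      = ∑ j ∈ range n, (-1 : ℤ) ^ i * (m.choose i : ℤ) * (eulerianNum n j * (((m - i) + j).choose n : ℤ)) := by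
    intro i _
    rw [worpitzky n hn (m - i), Finset.mul_sum]
  rw [Finset.sum_congr rfl h1, Finset.sum_comm]
  apply Finset.sum_congr rfl
  intro j _
  have h2 : ∀ i ∈ range (m + 1),
      (-1 : ℤ) ^ i * (m.choose i : ℤ) * (eulerianNum n j * (((m - i) + j).choose n : ℤ))
        = eulerianNum n j * ((-1 : ℤ) ^ i * (m.choose i : ℤ) * (((m - i) + j).choose n : ℤ)) := by
    intro i _
    ring
  rw [Finset.sum_congr rfl h2, ← Finset.mul_sum, alt_choose_sum' m j n hm]


theorem stirling2_eq_sum_eulerian (n m : ℕ) (hn : 1 ≤ n) (hm : m ≤ n) :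
    (stirling2 n m : ℚ) =
      (1 / (m.factorial : ℚ)) *
        ∑ j ∈ Finset.range n, (eulerianNum n j : ℚ) * (j.choose (n - m) : ℚ) := by
  have h := main_int n m hn hm
  have h0 : (m.factorial : ℚ) ≠ 0 := Nat.cast_ne_zero.mpr (Nat.factorial_ne_zero m)
  have hQ : (m.factorial : ℚ) * (stirling2 n m : ℚ)
      = ∑ j ∈ Finset.range n, (eulerianNum n j : ℚ) * (j.choose (n - m) : ℚ) := by
    exact_mod_cast congrArg (Int.cast : ℤ → ℚ) h
  rw [← hQ, one_div, inv_mul_cancel_left₀ h0]
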